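/- arXiv:2605.06556 — 3 statements merged into one kernel-verified Lean document; each statement's English description precedes it below -/
import Mathlib

section
/- With Adams D(k) = (2k - M)/(M-2), the Riemann sum P_M = Σ_{k=⌈M/2⌉}^{M-1} M·(1/k - 1/(k + D(k))) converges to 2·ln(2) - 1 as M → ∞. -/
open Filter Finset

private lemma sum_Icc_inv_eq (n : ℕ) : ∀ m : ℕ, n ≤ m →
    ∑ k ∈ Finset.Icc (n+1) m, (1:ℝ)/k = (harmonic m : ℝ) - harmonic n := by
  intro m
  induction m with
  | zero => intro h; interval_cases n; simp
  | succ m ih =>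
    intro h
    rcases Nat.lt_or_ge n (m+1) with h' | h'
    · have hnm : n ≤ m := by omega
      rw [Finset.sum_Icc_succ_top (by omega), ih hnm, harmonic_succ]
      push_cast
      ring
    · have : n = m + 1 := by omega
      subst this
      simp

private lemma tendsto_ratio_one (p q : ℝ) :
    Tendsto (fun M : ℕ => ((M:ℝ) - p)/((M:ℝ) - q)) atTop (nhds 1) := by
  have h0 : Tendsto (fun M : ℕ => (1:ℝ)/M) atTop (nhds 0) :=
    tendsto_one_div_atTop_nhds_zero_nat
  have h1 : Tendsto (fun M : ℕ => (1 - p * (1/M)) / (1 - q * (1/M))) atTop (nhds 1) := by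
    have := ((tendsto_const_nhds.sub (h0.const_mul p)).div
      (tendsto_const_nhds.sub (h0.const_mul q)) (by norm_num) :
      Tendsto (fun M : ℕ => ((1:ℝ) - p * (1/M)) / (1 - q * (1/M))) atTop (nhds ((1 - p*0)/(1 - q*0))))
    rw [mul_zero, mul_zero, sub_zero, div_one] at this; exact this
  apply h1.congr'
  filter_upwards [eventually_gt_atTop 0] with M hM
  have hM0 : (M:ℝ) ≠ 0 := by positivity
  field_simp

private lemma cast_le_of_nat_le {a b : ℕ} (h : a ≤ b) : (a:ℝ) ≤ b := by exact_mod_cast h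

private lemma tendsto_ratio_two (c d : ℕ) :
    Tendsto (fun M : ℕ => ((M:ℝ) - c) / (((M - d)/2 : ℕ) : ℝ)) atTop (nhds 2) := by
  have hlow : Tendsto (fun M : ℕ => 2 * (((M:ℝ) - c)/((M:ℝ) - d)) ) atTop (nhds 2) := by
    simpa using (tendsto_ratio_one c d).const_mul 2
  have hhigh : Tendsto (fun M : ℕ => 2 * (((M:ℝ) - c)/((M:ℝ) - (d+1))) ) atTop (nhds 2) := by
    simpa using (tendsto_ratio_one c (d+1)).const_mul 2
  apply tendsto_of_tendsto_of_tendsto_of_le_of_le' hlow hhigh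
  · filter_upwards [eventually_ge_atTop (2*c + 2*d + 10)] with M hM
    set q : ℝ := (((M - d)/2 : ℕ) : ℝ) with hqdef
    have hq2 : 2 * q ≤ (M:ℝ) - d := by
      have h : 2 * ((M - d)/2) ≤ (M - d : ℕ) := by omega
      have := cast_le_of_nat_le h
      rw [Nat.cast_mul, Nat.cast_sub (by omega : d ≤ M)] at this
      push_cast at this ⊢
      linarith
    have hqpos : (0:ℝ) < q := by
      have h : 1 ≤ (M - d)/2 := by omega
      have := cast_le_of_nat_le h
      push_cast at this; linarith
    have hx : (0:ℝ) ≤ (M:ℝ) - c := by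
      have : (c:ℝ) ≤ M := by exact_mod_cast (by omega : c ≤ M)
      linarith
    have hMd : (0:ℝ) < (M:ℝ) - d := by
      have : (d+1:ℝ) ≤ M := by exact_mod_cast (by omega : d+1 ≤ M)
      linarith
    rw [mul_div_assoc', div_le_div_iff₀ hMd hqpos]
    nlinarith
  · filter_upwards [eventually_ge_atTop (2*c + 2*d + 10)] with M hM
    set q : ℝ := (((M - d)/2 : ℕ) : ℝ) with hqdef
    have hq1 : (M:ℝ) - d - 1 ≤ 2 * q := by
      have h : (M - d - 1 : ℕ) ≤ 2 * ((M - d)/2) := by omega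
      have := cast_le_of_nat_le h
      rw [Nat.cast_mul, Nat.cast_sub (by omega : 1 ≤ M - d), Nat.cast_sub (by omega : d ≤ M)] at this
      push_cast at this ⊢
      linarith
    have hqpos : (0:ℝ) < q := by
      have h : 1 ≤ (M - d)/2 := by omega
      have := cast_le_of_nat_le h
      push_cast at this; linarith
    have hx : (0:ℝ) ≤ (M:ℝ) - c := by
      have : (c:ℝ) ≤ M := by exact_mod_cast (by omega : c ≤ M)
      linarith
    have hMd : (0:ℝ) < (M:ℝ) - (d+1) := by
      have : (d+2:ℝ) ≤ M := by exact_mod_cast (by omega : d+2 ≤ M)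
      push_cast at this ⊢
      linarith
    rw [mul_div_assoc', div_le_div_iff₀ hqpos hMd]
    nlinarith

private lemma tendsto_nat_sub_div (d : ℕ) :
    Tendsto (fun M : ℕ => (M - d)/2) atTop atTop := by
  apply tendsto_atTop_atTop.mpr
  intro b
  exact ⟨2*b + d, fun M hM => by omega⟩

private lemma tendsto_nat_sub (d : ℕ) :
    Tendsto (fun M : ℕ => M - d) atTop atTop := by
  apply tendsto_atTop_atTop.mpr
  intro b
  exact ⟨b + d, fun M hM => by omega⟩

private lemma tendsto_harm_diff :
    Tendsto (fun M : ℕ => (harmonic (M-2) : ℝ) - (harmonic ((M-3)/2) : ℝ))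
      atTop (nhds (Real.log 2)) := by
  have h1 : Tendsto (fun M : ℕ => (harmonic (M-2) : ℝ) - Real.log (M-2 : ℕ))
      atTop (nhds Real.eulerMascheroniConstant) :=
    Real.tendsto_harmonic_sub_log.comp (tendsto_nat_sub 2)
  have h2 : Tendsto (fun M : ℕ => (harmonic ((M-3)/2) : ℝ) - Real.log ((M-3)/2 : ℕ))
      atTop (nhds Real.eulerMascheroniConstant) :=
    Real.tendsto_harmonic_sub_log.comp (tendsto_nat_sub_div 3)
  have h3 : Tendsto (fun M : ℕ => Real.log (((M-2:ℕ):ℝ) / (((M-3)/2 : ℕ):ℝ)))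
      atTop (nhds (Real.log 2)) := by
    apply Tendsto.comp (Real.continuousAt_log (by norm_num)).tendsto
    have := tendsto_ratio_two 2 3
    apply this.congr'
    filter_upwards [eventually_ge_atTop 3] with M hM
    rw [Nat.cast_sub (by omega : 2 ≤ M)]
  have key := (h1.sub h2).add h3
  rw [sub_self, zero_add] at key
  apply key.congr'
  filter_upwards [eventually_ge_atTop 10] with M hM
  have hn1 : ((M-2:ℕ):ℝ) ≠ 0 := by
    have : 1 ≤ M - 2 := by omega
    positivity
  have hn2 : (((M-3)/2:ℕ):ℝ) ≠ 0 := by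
    have : 1 ≤ (M-3)/2 := by omega
    positivity
  rw [Real.log_div hn1 hn2]
  ring

/-- With Adams D(k) = (2k - M)/(M - 2), the sum
P_M = Σ_{k=⌈M/2⌉}^{M-1} M(1/k - 1/(k + D(k))) converges to 2 ln 2 - 1 as M → ∞. -/
theorem adams_prob_limit :
    Tendsto (fun M : ℕ =>
      ∑ k ∈ Finset.Icc ((M + 1) / 2) (M - 1),
        (M : ℝ) * (1 / k - 1 / ((k : ℝ) + (2 * (k : ℝ) - M) / ((M : ℝ) - 2))))
      atTop (nhds (2 * Real.log 2 - 1)) := by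
  have T1 : Tendsto (fun M : ℕ => (M:ℝ)/((M:ℝ)-1)) atTop (nhds 1) := by
    have := tendsto_ratio_one 0 1
    simpa using this
  have T2 : Tendsto (fun M : ℕ => (M:ℝ)/((((M-1)/2:ℕ)):ℝ)) atTop (nhds 2) := by
    have := tendsto_ratio_two 0 1
    simpa using this
  have Tg : Tendsto (fun M : ℕ =>
      2*((harmonic (M-2):ℝ) - (harmonic ((M-3)/2):ℝ)) + (M:ℝ)/((M:ℝ)-1)
        - (M:ℝ)/((((M-1)/2:ℕ)):ℝ)) atTop (nhds (2 * Real.log 2 - 1)) := by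
    have := ((tendsto_harm_diff.const_mul 2).add T1).sub T2
    norm_num at this
    convert this using 2
    ring
  apply Tg.congr'
  filter_upwards [eventually_ge_atTop 12] with M hM
  set a : ℕ := (M+1)/2 with ha
  have hM0 : (M:ℝ) ≠ 0 := by positivity
  have hMR : (12:ℝ) ≤ M := by exact_mod_cast hM
  have hM2 : (M:ℝ) - 2 ≠ 0 := by linarith
  -- pointwise rewrite
  have hstep : ∀ k ∈ Finset.Icc a (M-1),
      (M : ℝ) * (1 / k - 1 / ((k : ℝ) + (2 * (k : ℝ) - M) / ((M : ℝ) - 2)))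
        = (M:ℝ)*(1/(k:ℝ)) - ((M:ℝ)-2)*(1/((k:ℝ)-1)) := by
    intro k hk
    rw [Finset.mem_Icc] at hk
    have hk2 : 2 ≤ k := by omega
    have hk2R : (2:ℝ) ≤ k := by exact_mod_cast hk2
    have hk0 : (k:ℝ) ≠ 0 := by linarith
    have hk1 : (k:ℝ) - 1 ≠ 0 := by linarith
    have hkey : (k:ℝ) + (2*(k:ℝ) - M)/((M:ℝ)-2) = (M:ℝ)*((k:ℝ)-1)/((M:ℝ)-2) := by
      field_simp
      ring
    rw [hkey]
    field_simp
  rw [Finset.sum_congr rfl hstep, Finset.sum_sub_distrib, ← Finset.mul_sum, ← Finset.mul_sum]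
  -- reindex second sum
  have hre : ∑ k ∈ Finset.Icc a (M-1), (1:ℝ)/((k:ℝ)-1)
      = ∑ j ∈ Finset.Icc (a-1) (M-2), (1:ℝ)/(j:ℝ) := by
    have h1 : Finset.Icc a (M-1) = (Finset.Icc (a-1) (M-2)).map (addRightEmbedding 1) := by
      rw [Finset.map_add_right_Icc]
      congr 1 <;> omega
    rw [h1, Finset.sum_map]
    apply Finset.sum_congr rfl
    intro j hj
    simp only [addRightEmbedding_apply]
    push_cast
    norm_num
  rw [hre]
  have hs1 : ∑ k ∈ Finset.Icc a (M-1), (1:ℝ)/(k:ℝ)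
      = (harmonic (M-1):ℝ) - harmonic (a-1) := by
    have := sum_Icc_inv_eq (a-1) (M-1) (by omega)
    rwa [show a-1+1 = a by omega] at this
  have hs2 : ∑ j ∈ Finset.Icc (a-1) (M-2), (1:ℝ)/(j:ℝ)
      = (harmonic (M-2):ℝ) - harmonic (a-2) := by
    have := sum_Icc_inv_eq (a-2) (M-2) (by omega)
    rwa [show a-2+1 = a-1 by omega] at this
  rw [hs1, hs2]
  have hh1 : (harmonic (M-1):ℝ) = (harmonic (M-2):ℝ) + 1/((M:ℝ)-1) := by
    rw [show M-1 = (M-2)+1 by omega, harmonic_succ]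
    push_cast [Nat.cast_sub (by omega : 2 ≤ M)]
    ring
  have hh2 : (harmonic (a-1):ℝ) = (harmonic (a-2):ℝ) + 1/(((a-1:ℕ)):ℝ) := by
    rw [show a-1 = (a-2)+1 by omega, harmonic_succ]
    push_cast [Nat.cast_sub (by omega : 2 ≤ a)]
    ring
  have e1 : a - 1 = (M-1)/2 := by omega
  have e2 : a - 2 = (M-3)/2 := by omega
  rw [hh1, hh2, e1, e2]
  ring
end

section
/- Suppose δ(k) = k + 1/2 + O(1/k). Then the sum P_M = Σ_{k=⌈M/2⌉}^{M-1} M·(1/k - 1/(k + D(k))), with D(k) = ((M-k)·δ(k-1) - k·δ(M-k-1))/(δ(k-1) + δ(M-k-1)), converges to ln(2) - 1/2 as M → ∞. -/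
open Filter

open Real Finset


noncomputable def Hh (n : ℕ) : ℝ := (harmonic n : ℝ)

lemma Hh_eq (n : ℕ) : Hh n = ∑ i ∈ Finset.Ioc 0 n, (1:ℝ)/i := by
  rw [Hh, harmonic_eq_sum_Icc]
  push_cast
  rw [← Finset.Icc_add_one_left_eq_Ioc]
  simp [one_div]

lemma sum_inv_Icc {a b : ℕ} (ha : 1 ≤ a) (hab : a ≤ b + 1) :
    ∑ k ∈ Finset.Icc a b, (1:ℝ)/k = Hh b - Hh (a-1) := by
  have h1 : Finset.Icc a b = Finset.Ioc (a-1) b := by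
    ext x; simp [Finset.mem_Icc, Finset.mem_Ioc]; omega
  have h2 := Finset.sum_Ioc_consecutive (fun i => (1:ℝ)/i) (Nat.zero_le (a-1))
      (by omega : a - 1 ≤ b)
  rw [h1, Hh_eq, Hh_eq, ← h2]; ring

lemma tendsto_Hh_sub_log : Filter.Tendsto (fun n : ℕ => Hh n - Real.log n) atTop
    (nhds Real.eulerMascheroniConstant) := Real.tendsto_harmonic_sub_log

lemma aux_const_div (c s : ℝ) : Filter.Tendsto (fun M : ℕ => c/((M:ℝ) + s)) atTop (nhds 0) := by
  apply Tendsto.div_atTop (tendsto_const_nhds)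
  exact tendsto_atTop_add_const_right _ s tendsto_natCast_atTop_atTop

lemma aux_lin_ratio (p r s : ℝ) :
    Filter.Tendsto (fun M : ℕ => (p*(M:ℝ) + r)/((M:ℝ) + s)) atTop (nhds p) := by
  have h := (aux_const_div (r - p*s) s).const_add p
  rw [add_zero] at h
  apply h.congr'
  filter_upwards [eventually_gt_atTop (Nat.ceil |s|)] with M hM
  have hs : (M:ℝ) + s > 0 := by
    have : |s| ≤ (Nat.ceil |s| : ℝ) := Nat.le_ceil _
    have : (Nat.ceil |s| : ℝ) < M := by exact_mod_cast hM
    have := abs_lt.mp (lt_of_le_of_lt (Nat.le_ceil |s|) this)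
    linarith [this.1]
  field_simp
  ring

lemma tendsto_H_diff (a b : ℕ → ℕ) (ha : Filter.Tendsto a atTop atTop)
    (hb : Filter.Tendsto b atTop atTop)
    (hr : Filter.Tendsto (fun M => (a M : ℝ)/(b M)) atTop (nhds 2)) :
    Filter.Tendsto (fun M => Hh (a M) - Hh (b M)) atTop (nhds (Real.log 2)) := by
  have h1 := tendsto_Hh_sub_log.comp ha
  have h2 := tendsto_Hh_sub_log.comp hb
  have hlog : Filter.Tendsto (fun M => Real.log ((a M : ℝ)/(b M))) atTop
      (nhds (Real.log 2)) :=
    ((Real.continuousAt_log (by norm_num)).tendsto).comp hr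
  have h3 := (h1.sub h2).add hlog
  rw [sub_self, zero_add] at h3
  apply h3.congr'
  filter_upwards [ha.eventually_ge_atTop 1, hb.eventually_ge_atTop 1] with M hA hB
  have hA' : (a M : ℝ) > 0 := by exact_mod_cast hA
  have hB' : (b M : ℝ) > 0 := by exact_mod_cast hB
  simp only [Function.comp]
  rw [Real.log_div hA'.ne' hB'.ne']
  ring

lemma half_div_bounds (M i : ℕ) (h : 2*i + 2 ≤ M) :
    (M:ℝ)/2 - i ≤ (((M+1)/2 - i : ℕ) : ℝ) ∧ (((M+1)/2 - i : ℕ) : ℝ) ≤ ((M:ℝ)+1)/2 - i := by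
  have h1 : M ≤ 2 * ((M+1)/2) := by omega
  have h2 : 2 * ((M+1)/2) ≤ M + 1 := by omega
  have h3 : i ≤ (M+1)/2 := by omega
  have e : (((M+1)/2 - i : ℕ) : ℝ) = (((M+1)/2 : ℕ) : ℝ) - i := by
    push_cast [Nat.cast_sub h3]; ring
  have h1' : (M:ℝ) ≤ 2 * (((M+1)/2 : ℕ) : ℝ) := by exact_mod_cast h1
  have h2' : 2 * (((M+1)/2 : ℕ) : ℝ) ≤ (M:ℝ) + 1 := by exact_mod_cast h2
  constructor <;> (rw [e]; linarith)

lemma ratio2 (i : ℕ) :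
    Filter.Tendsto (fun M : ℕ => ((M - i : ℕ):ℝ)/(((M+1)/2 - i : ℕ):ℝ)) atTop (nhds 2) := by
  have hl := (aux_lin_ratio 1 (-(i:ℝ)) (1-2*i)).const_mul 2
  have hu := (aux_lin_ratio 1 (-(i:ℝ)) (-(2*i))).const_mul 2
  rw [mul_one] at hl hu
  apply tendsto_of_tendsto_of_tendsto_of_le_of_le' hl hu
  · filter_upwards [eventually_ge_atTop (4*i+8)] with M hM
    obtain ⟨hb1, hb2⟩ := half_div_bounds M i (by omega)
    have hi : (i:ℝ) ≤ M := by exact_mod_cast (by omega : i ≤ M)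
    have hM8 : (8:ℝ) ≤ (M:ℝ) - 4*i + 0 := by
      have : 4*i + 8 ≤ M := hM
      have := (Nat.cast_le (α := ℝ)).mpr this; push_cast at this; linarith
    have ec : ((M - i : ℕ):ℝ) = (M:ℝ) - i := by
      have : i ≤ M := by omega
      push_cast [Nat.cast_sub this]; ring
    rw [ec]
    have hq : (0:ℝ) < (((M+1)/2 - i : ℕ):ℝ) := by linarith
    have hd : (0:ℝ) < (M:ℝ) + (1 - 2*i) := by push_cast; linarith
    rw [mul_comm, div_mul_eq_mul_div, div_le_div_iff₀ hd hq]
    push_cast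
    nlinarith [hb2, hi]
  · filter_upwards [eventually_ge_atTop (4*i+8)] with M hM
    obtain ⟨hb1, hb2⟩ := half_div_bounds M i (by omega)
    have hi : (i:ℝ) ≤ M := by exact_mod_cast (by omega : i ≤ M)
    have hM8 : (8:ℝ) ≤ (M:ℝ) - 4*i := by
      have : 4*i + 8 ≤ M := hM
      have := (Nat.cast_le (α := ℝ)).mpr this; push_cast at this; linarith
    have ec : ((M - i : ℕ):ℝ) = (M:ℝ) - i := by
      have : i ≤ M := by omega
      push_cast [Nat.cast_sub this]; ring
    rw [ec]
    have hq : (0:ℝ) < (((M+1)/2 - i : ℕ):ℝ) := by linarith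
    have hd : (0:ℝ) < (M:ℝ) + (-(2*(i:ℝ))) := by linarith
    rw [mul_comm, div_mul_eq_mul_div, div_le_div_iff₀ hq hd]
    push_cast
    nlinarith [hb1, hi]

lemma half_ratio (i : ℕ) :
    Filter.Tendsto (fun M : ℕ => (M:ℝ)/(2*(((M+1)/2 - i : ℕ):ℝ))) atTop (nhds 1) := by
  have hl := aux_lin_ratio 1 0 (1-2*i)
  have hu := aux_lin_ratio 1 0 (-(2*i))
  apply tendsto_of_tendsto_of_tendsto_of_le_of_le' hl hu
  · filter_upwards [eventually_ge_atTop (4*i+8)] with M hM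
    obtain ⟨hb1, hb2⟩ := half_div_bounds M i (by omega)
    have hM8 : (8:ℝ) ≤ (M:ℝ) - 4*i := by
      have := (Nat.cast_le (α := ℝ)).mpr hM; push_cast at this; linarith
    have hq : (0:ℝ) < 2*(((M+1)/2 - i : ℕ):ℝ) := by linarith
    have hd : (0:ℝ) < (M:ℝ) + (1 - 2*i) := by push_cast; linarith
    rw [div_le_div_iff₀ hd hq]
    push_cast
    nlinarith [hb2]
  · filter_upwards [eventually_ge_atTop (4*i+8)] with M hM
    obtain ⟨hb1, hb2⟩ := half_div_bounds M i (by omega)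
    have hM8 : (8:ℝ) ≤ (M:ℝ) - 4*i := by
      have := (Nat.cast_le (α := ℝ)).mpr hM; push_cast at this; linarith
    have hq : (0:ℝ) < 2*(((M+1)/2 - i : ℕ):ℝ) := by linarith
    have hd : (0:ℝ) < (M:ℝ) + (-(2*(i:ℝ))) := by linarith
    rw [div_le_div_iff₀ hq hd]
    push_cast
    nlinarith [hb1]

lemma tendsto_half_sub (i : ℕ) :
    Filter.Tendsto (fun M : ℕ => (M+1)/2 - i) atTop atTop :=
  tendsto_atTop_atTop.mpr (fun b => ⟨2*b+2*i+2, fun a ha => by omega⟩)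

lemma tendsto_sub_nat (i : ℕ) : Filter.Tendsto (fun M : ℕ => M - i) atTop atTop :=
  tendsto_atTop_atTop.mpr (fun b => ⟨b+i, fun a ha => by omega⟩)

lemma tendsto_G : Filter.Tendsto
    (fun M : ℕ => ∑ k ∈ Finset.Icc ((M+1)/2) (M-1), 1/((k:ℝ)-1/2)) atTop
    (nhds (Real.log 2)) := by
  have hl : Filter.Tendsto (fun M : ℕ => Hh (M-1) - Hh ((M+1)/2 - 1)) atTop
      (nhds (Real.log 2)) :=
    tendsto_H_diff _ _ (tendsto_sub_nat 1) (tendsto_half_sub 1) (ratio2 1)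
  have hu : Filter.Tendsto (fun M : ℕ => Hh (M-2) - Hh ((M+1)/2 - 2)) atTop
      (nhds (Real.log 2)) :=
    tendsto_H_diff _ _ (tendsto_sub_nat 2) (tendsto_half_sub 2) (ratio2 2)
  apply tendsto_of_tendsto_of_tendsto_of_le_of_le' hl hu
  · filter_upwards [eventually_ge_atTop 8] with M hM
    have h1 : (1:ℕ) ≤ (M+1)/2 := by omega
    have h2 : (M+1)/2 ≤ (M-1) + 1 := by omega
    rw [← sum_inv_Icc h1 h2]
    apply Finset.sum_le_sum
    intro k hk
    simp only [Finset.mem_Icc] at hk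
    have hk2 : (2:ℝ) ≤ k := by exact_mod_cast (by omega : 2 ≤ k)
    rw [div_le_div_iff₀ (by linarith) (by linarith)]
    linarith
  · filter_upwards [eventually_ge_atTop 8] with M hM
    have key : ∑ k ∈ Finset.Icc ((M+1)/2) (M-1), 1/((k:ℝ)-1) =
        Hh (M-2) - Hh ((M+1)/2 - 2) := by
      have h1 : (1:ℕ) ≤ (M+1)/2 - 1 := by omega
      have h2 : (M+1)/2 - 1 ≤ (M-2) + 1 := by omega
      have e0 : (M+1)/2 - 2 = ((M+1)/2 - 1) - 1 := by omega
      rw [e0, ← sum_inv_Icc h1 h2]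
      have e1 : Finset.Icc ((M+1)/2) (M-1) = Finset.Ico ((M+1)/2) M := by
        rw [← Finset.Ico_add_one_right_eq_Icc]; congr 1; omega
      have e2 : Finset.Icc ((M+1)/2 - 1) (M-2) = Finset.Ico ((M+1)/2 - 1) (M-1) := by
        rw [← Finset.Ico_add_one_right_eq_Icc]; congr 1; omega
      rw [e1, e2, Finset.sum_Ico_eq_sum_range, Finset.sum_Ico_eq_sum_range]
      have hlen : M - (M+1)/2 = (M-1) - ((M+1)/2 - 1) := by omega
      rw [← hlen]
      apply Finset.sum_congr rfl
      intro i _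
      have hc : (((M+1)/2 - 1 + i : ℕ):ℝ) = (((M+1)/2 + i : ℕ):ℝ) - 1 := by
        have : 1 ≤ (M+1)/2 := by omega
        push_cast [Nat.cast_sub this]; ring
      rw [hc]
    rw [← key]
    apply Finset.sum_le_sum
    intro k hk
    simp only [Finset.mem_Icc] at hk
    have hk2 : (2:ℝ) ≤ k := by exact_mod_cast (by omega : 2 ≤ k)
    rw [div_le_div_iff₀ (by linarith) (by linarith)]
    linarith

lemma telescope_sum (m M : ℕ) (hm : 1 ≤ m) (hmM : m ≤ M) :
    ∑ k ∈ Finset.Icc m (M-1), (1/((k:ℝ)) - 1/((k:ℝ)+1)) = 1/(m:ℝ) - 1/(M:ℝ) := by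
  have e1 : Finset.Icc m (M-1) = Finset.Ico m M := by
    rw [← Finset.Ico_add_one_right_eq_Icc]; congr 1; omega
  rw [e1, Finset.sum_Ico_eq_sum_range]
  have key : ∀ i ∈ Finset.range (M - m),
      1/(((m+i:ℕ)):ℝ) - 1/((((m+i:ℕ)):ℝ)+1) =
        (fun j : ℕ => 1/((m:ℝ)+j)) i - (fun j : ℕ => 1/((m:ℝ)+j)) (i+1) := by
    intro i _; push_cast; ring_nf
  rw [Finset.sum_congr rfl key, Finset.sum_range_sub' (fun j : ℕ => 1/((m:ℝ)+j))]
  rw [Nat.cast_sub hmM]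
  norm_num

lemma telescope_sum' (m M : ℕ) (hm : 2 ≤ m) (hmM : m ≤ M) :
    ∑ k ∈ Finset.Icc m (M-1), (1/((k:ℝ)-1) - 1/(k:ℝ)) = 1/((m:ℝ)-1) - 1/((M:ℝ)-1) := by
  have e1 : Finset.Icc m (M-1) = Finset.Ico m M := by
    rw [← Finset.Ico_add_one_right_eq_Icc]; congr 1; omega
  rw [e1, Finset.sum_Ico_eq_sum_range]
  have key : ∀ i ∈ Finset.range (M - m),
      1/((((m+i:ℕ)):ℝ)-1) - 1/(((m+i:ℕ)):ℝ) =
        (fun j : ℕ => 1/((m:ℝ)+j-1)) i - (fun j : ℕ => 1/((m:ℝ)+j-1)) (i+1) := by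
    intro i _; push_cast; ring_nf
  rw [Finset.sum_congr rfl key, Finset.sum_range_sub' (fun j : ℕ => 1/((m:ℝ)+j-1))]
  rw [Nat.cast_sub hmM]
  norm_num

lemma tendsto_T : Filter.Tendsto
    (fun M : ℕ => ∑ k ∈ Finset.Icc ((M+1)/2) (M-1), (M:ℝ)*(1/((k:ℝ)-1/2) - 1/(k:ℝ)))
    atTop (nhds (1/2)) := by
  have hb : Filter.Tendsto (fun M : ℕ => (M:ℝ)/(2*((M-1:ℕ):ℝ))) atTop (nhds (1/2)) := by
    have h := (aux_lin_ratio 1 0 (-1)).const_mul (1/2)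
    rw [mul_one] at h
    apply h.congr'
    filter_upwards [eventually_ge_atTop 2] with M hM
    have h1 : (1:ℕ) ≤ M := by omega
    rw [Nat.cast_sub h1]
    have hM2 : (2:ℝ) ≤ M := by exact_mod_cast hM
    have h2 : (M:ℝ) - 1 ≠ 0 := by linarith
    have h3 : (M:ℝ) + (-1) ≠ 0 := by linarith
    have h4 : (-2:ℝ) + (M:ℝ)*2 ≠ 0 := by linarith
    have h5 : (-2:ℝ) + 2*(M:ℝ) ≠ 0 := by linarith
    push_cast
    field_simp
    ring
  have hl : Filter.Tendsto (fun M : ℕ => (M:ℝ)/(2*(((M+1)/2:ℕ):ℝ)) - 1/2) atTop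
      (nhds (1/2)) := by
    have h := (half_ratio 0).sub_const (1/2)
    simp only [Nat.sub_zero] at h
    convert h using 2
    norm_num
  have hu : Filter.Tendsto
      (fun M : ℕ => (M:ℝ)/(2*(((M+1)/2-1:ℕ):ℝ)) - (M:ℝ)/(2*((M-1:ℕ):ℝ))) atTop
      (nhds (1/2)) := by
    have h := (half_ratio 1).sub hb
    convert h using 2
    norm_num
  apply tendsto_of_tendsto_of_tendsto_of_le_of_le' hl hu
  · filter_upwards [eventually_ge_atTop 8] with M hM
    set m := (M+1)/2 with hm
    have hm2 : 2 ≤ m := by omega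
    have hmM : m ≤ M := by omega
    have hmr : (2:ℝ) ≤ (m:ℝ) := by exact_mod_cast hm2
    have hMr : (8:ℝ) ≤ (M:ℝ) := by exact_mod_cast hM
    have tl := telescope_sum m M (by omega) hmM
    calc (M:ℝ)/(2*(m:ℝ)) - 1/2 = (M:ℝ)/2 * (1/(m:ℝ) - 1/(M:ℝ)) := by
          field_simp
      _ = ∑ k ∈ Finset.Icc m (M-1), (M:ℝ)/2 * (1/((k:ℝ)) - 1/((k:ℝ)+1)) := by
          rw [← Finset.mul_sum, tl]
      _ ≤ ∑ k ∈ Finset.Icc m (M-1), (M:ℝ)*(1/((k:ℝ)-1/2) - 1/(k:ℝ)) := by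
          apply Finset.sum_le_sum
          intro k hk
          simp only [Finset.mem_Icc] at hk
          have hx : (2:ℝ) ≤ (k:ℝ) := by exact_mod_cast (by omega : 2 ≤ k)
          have e1 : 1/((k:ℝ)) - 1/((k:ℝ)+1) = 1/((k:ℝ)*((k:ℝ)+1)) := by
            field_simp; ring
          have hk0 : (k:ℝ) ≠ 0 := by linarith
          have hkh : (k:ℝ)-1/2 ≠ 0 := by linarith
          have hk1 : (k:ℝ)-1 ≠ 0 := by linarith
          have hd2 : (k:ℝ)*((k:ℝ)-1/2) ≠ 0 := mul_ne_zero hk0 hkh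
          have e2 : 1/((k:ℝ)-1/2) - 1/(k:ℝ) = 1/2 * (1/((k:ℝ)*((k:ℝ)-1/2))) := by
            rw [div_sub_div _ _ hkh hk0, mul_one_div, div_div,
              div_eq_div_iff (mul_ne_zero hkh hk0) (by positivity)]
            ring
          rw [e1, e2]
          have hle : 1/((k:ℝ)*((k:ℝ)+1)) ≤ 1/((k:ℝ)*((k:ℝ)-1/2)) := by
            apply one_div_le_one_div_of_le (by nlinarith) (by nlinarith)
          have hM0 : (0:ℝ) ≤ (M:ℝ)/2 := by linarith
          calc (M:ℝ)/2 * (1/((k:ℝ)*((k:ℝ)+1))) ≤ (M:ℝ)/2 * (1/((k:ℝ)*((k:ℝ)-1/2))) :=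
                mul_le_mul_of_nonneg_left hle hM0
            _ = (M:ℝ) * (1/2 * (1/((k:ℝ)*((k:ℝ)-1/2)))) := by ring
  · filter_upwards [eventually_ge_atTop 8] with M hM
    set m := (M+1)/2 with hm
    have hm2 : 2 ≤ m := by omega
    have hmM : m ≤ M := by omega
    have hmr : (2:ℝ) ≤ (m:ℝ) := by exact_mod_cast hm2
    have hMr : (8:ℝ) ≤ (M:ℝ) := by exact_mod_cast hM
    have hmltM : (m:ℝ) < (M:ℝ) := by exact_mod_cast (by omega : m < M)
    have tu := telescope_sum' m M hm2 hmM
    have ec1 : ((m-1:ℕ):ℝ) = (m:ℝ)-1 := by rw [Nat.cast_sub (by omega : 1 ≤ m)]; norm_num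
    have ec2 : ((M-1:ℕ):ℝ) = (M:ℝ)-1 := by rw [Nat.cast_sub (by omega : 1 ≤ M)]; norm_num
    calc ∑ k ∈ Finset.Icc m (M-1), (M:ℝ)*(1/((k:ℝ)-1/2) - 1/(k:ℝ))
        ≤ ∑ k ∈ Finset.Icc m (M-1), (M:ℝ)/2 * (1/((k:ℝ)-1) - 1/((k:ℝ))) := by
          apply Finset.sum_le_sum
          intro k hk
          simp only [Finset.mem_Icc] at hk
          have hx : (2:ℝ) ≤ (k:ℝ) := by exact_mod_cast (by omega : 2 ≤ k)
          have hk0 : (k:ℝ) ≠ 0 := by linarith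
          have hkh : (k:ℝ)-1/2 ≠ 0 := by linarith
          have hk1 : (k:ℝ)-1 ≠ 0 := by linarith
          have hd2 : (k:ℝ)*((k:ℝ)-1/2) ≠ 0 := mul_ne_zero hk0 hkh
          have e2 : 1/((k:ℝ)-1/2) - 1/(k:ℝ) = 1/2 * (1/((k:ℝ)*((k:ℝ)-1/2))) := by
            rw [div_sub_div _ _ hkh hk0, mul_one_div, div_div,
              div_eq_div_iff (mul_ne_zero hkh hk0) (by positivity)]
            ring
          have e3 : 1/((k:ℝ)-1) - 1/(k:ℝ) = 1/((k:ℝ)*((k:ℝ)-1)) := by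
            rw [div_sub_div _ _ hk1 hk0,
              div_eq_div_iff (mul_ne_zero hk1 hk0) (mul_ne_zero hk0 hk1)]
            ring
          rw [e2, e3]
          have hle : 1/((k:ℝ)*((k:ℝ)-1/2)) ≤ 1/((k:ℝ)*((k:ℝ)-1)) := by
            apply one_div_le_one_div_of_le (by nlinarith) (by nlinarith)
          have hM0 : (0:ℝ) ≤ (M:ℝ)/2 := by linarith
          calc (M:ℝ) * (1/2 * (1/((k:ℝ)*((k:ℝ)-1/2))))
              = (M:ℝ)/2 * (1/((k:ℝ)*((k:ℝ)-1/2))) := by ring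
            _ ≤ (M:ℝ)/2 * (1/((k:ℝ)*((k:ℝ)-1))) := mul_le_mul_of_nonneg_left hle hM0
      _ = (M:ℝ)/2 * (1/((m:ℝ)-1) - 1/((M:ℝ)-1)) := by rw [← Finset.mul_sum, tu]
      _ = (M:ℝ)/(2*(((m-1:ℕ)):ℝ)) - (M:ℝ)/(2*((M-1:ℕ):ℝ)) := by
          rw [ec1, ec2]
          have h1 : (m:ℝ) - 1 > 0 := by linarith
          have h2 : (M:ℝ) - 1 > 0 := by linarith
          field_simp

lemma basic_casts {M k : ℕ} (hM : 8 ≤ M) (hk : (M+1)/2 ≤ k) (hk2 : k ≤ M-1) :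
    ((k-1:ℕ):ℝ) = (k:ℝ)-1 ∧ ((M-k-1:ℕ):ℝ) = (M:ℝ)-(k:ℝ)-1 ∧
      (M:ℝ)/2 ≤ (k:ℝ) ∧ (k:ℝ) ≤ (M:ℝ)-1 ∧ (8:ℝ) ≤ (M:ℝ) := by
  have h1 : 1 ≤ k := by omega
  have h2 : k + 1 ≤ M := by omega
  have h3 : M ≤ 2*k := by omega
  have c1 : ((k-1:ℕ):ℝ) = (k:ℝ)-1 := by rw [Nat.cast_sub h1]; norm_num
  have c2 : ((M-k-1:ℕ):ℝ) = (M:ℝ)-(k:ℝ)-1 := by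
    have : M - k - 1 = M - (k+1) := by omega
    rw [this, Nat.cast_sub h2]; push_cast; ring
  have c3 : (M:ℝ) ≤ 2*(k:ℝ) := by exact_mod_cast h3
  have c4 : (k:ℝ)+1 ≤ (M:ℝ) := by exact_mod_cast h2
  have c5 : (8:ℝ) ≤ (M:ℝ) := by exact_mod_cast hM
  exact ⟨c1, c2, by linarith, by linarith, c5⟩

lemma delta_facts (δ : ℕ → ℝ) (hmono : StrictMono δ) (C : ℝ)
    (hC : ∀ k : ℕ, 1 ≤ k → |δ k - ((k : ℝ) + 1/2)| ≤ C / k)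
    {M k : ℕ} (hM : 8 ≤ M) (hMr : 8*(max C 1 + |δ 0| + 1) ≤ (M:ℝ))
    (hk : (M+1)/2 ≤ k) (hk2 : k ≤ M-1) :
    (M:ℝ)/4 ≤ δ (k-1) ∧ 0 < δ (k-1) + δ (M-k-1) ∧
      |δ (k-1) - ((k:ℝ)-1/2)| ≤ 4*(max C 1)/(M:ℝ) := by
  obtain ⟨c1, c2, c3, c4, c5⟩ := basic_casts hM hk hk2
  set c := max C 1 with hc
  have hc1 : (1:ℝ) ≤ c := le_max_right _ _
  have hcC : C ≤ c := le_max_left _ _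
  have hd0 : (0:ℝ) ≤ |δ 0| := abs_nonneg _
  have hk1 : 1 ≤ k - 1 := by omega
  have ha0 := hC (k-1) hk1
  rw [c1] at ha0
  have hkm : (M:ℝ)/4 ≤ (k:ℝ)-1 := by linarith
  have ha : |δ (k-1) - ((k:ℝ)-1+1/2)| ≤ 4*c/(M:ℝ) := by
    refine ha0.trans ?_
    have h4 : (0:ℝ) < (M:ℝ)/4 := by linarith
    calc C/((k:ℝ)-1) ≤ c/((M:ℝ)/4) :=
          div_le_div₀ (by linarith) hcC h4 hkm
      _ = 4*c/(M:ℝ) := by rw [div_div_eq_mul_div]; ring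
  have ha' : |δ (k-1) - ((k:ℝ)-1/2)| ≤ 4*c/(M:ℝ) := by
    have : (k:ℝ)-1+1/2 = (k:ℝ)-1/2 := by ring
    rwa [this] at ha
  have hsmall : 4*c/(M:ℝ) ≤ 1/2 := by
    rw [div_le_iff₀ (by linarith)]
    linarith
  have habs := abs_le.mp ha'
  have hu_lb : (M:ℝ)/4 ≤ δ (k-1) := by linarith
  have hv_lb : -(|δ 0|) ≤ δ (M-k-1) := by
    have := hmono.monotone (Nat.zero_le (M-k-1))
    have := neg_abs_le (δ 0)
    linarith
  refine ⟨hu_lb, ?_, ha'⟩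
  linarith

lemma term_eq (δ : ℕ → ℝ) (M k : ℕ) (hk0 : 1 ≤ k) (hM0 : 1 ≤ M)
    (hu : 0 < δ (k-1)) (huv : 0 < δ (k-1) + δ (M-k-1)) :
    (M:ℝ) * (1/(k:ℝ) - 1/((k:ℝ) +
        (((M:ℝ)-(k:ℝ))*δ (k-1) - (k:ℝ)*δ (M-k-1))/(δ (k-1) + δ (M-k-1)))) =
      (M:ℝ)/(k:ℝ) - 1 - δ (M-k-1)/δ (k-1) := by
  set u := δ (k-1)
  set v := δ (M-k-1)
  have hkr : (0:ℝ) < (k:ℝ) := by exact_mod_cast hk0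
  have hMr : (0:ℝ) < (M:ℝ) := by exact_mod_cast hM0
  have key : (k:ℝ) + (((M:ℝ)-(k:ℝ))*u - (k:ℝ)*v)/(u+v) = (M:ℝ)*u/(u+v) := by
    field_simp
    ring
  rw [key, one_div_div]
  field_simp
  ring

lemma Ebound1 (Mr kr u v c : ℝ) (hM : 8 ≤ Mr) (hk : Mr/2 ≤ kr) (hkM : 2 ≤ Mr - kr)
    (hu : Mr/4 ≤ u) (ha : |u - (kr - 1/2)| ≤ 4*c/Mr)
    (hb : |v - (Mr - kr - 1/2)| ≤ 2*c/(Mr-kr)) (hc0 : 1 ≤ c) :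
    |(Mr-kr-1/2)/(kr-1/2) - v/u| ≤ 64*c/Mr^2 + 32*c/(Mr*(Mr-kr)) := by
  set w := kr - 1/2 with hw
  set z := Mr - kr - 1/2 with hz
  have hwpos : (0:ℝ) < w := by rw [hw]; linarith
  have hw_lb : Mr/4 ≤ w := by rw [hw]; linarith
  have hupos : (0:ℝ) < u := by linarith
  have hMpos : (0:ℝ) < Mr := by linarith
  have hzpos : (0:ℝ) < z := by rw [hz]; linarith
  have hzM : z ≤ Mr := by rw [hz]; linarith
  have hwM : w ≤ Mr := by rw [hw]; linarith
  have hwu : Mr^2/16 ≤ w*u := by nlinarith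
  rw [div_sub_div _ _ hwpos.ne' hupos.ne']
  have enum : z*u - w*v = z*(u-w) - w*(v-z) := by ring
  rw [enum, abs_div, abs_of_pos (by positivity : (0:ℝ) < w*u)]
  have t1 : |z*(u-w)| ≤ Mr*(4*c/Mr) := by
    rw [abs_mul]
    apply mul_le_mul (by rw [abs_of_pos hzpos]; linarith) ha (abs_nonneg _) (by linarith)
  have t2 : |w*(v-z)| ≤ Mr*(2*c/(Mr-kr)) := by
    rw [abs_mul]
    apply mul_le_mul (by rw [abs_of_pos hwpos]; linarith) hb (abs_nonneg _) (by linarith)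
  have hnum : |z*(u-w) - w*(v-z)| ≤ Mr*(4*c/Mr) + Mr*(2*c/(Mr-kr)) :=
    (abs_sub _ _).trans (add_le_add t1 t2)
  calc |z*(u-w) - w*(v-z)|/(w*u)
      ≤ (Mr*(4*c/Mr) + Mr*(2*c/(Mr-kr)))/(Mr^2/16) := by
        apply div_le_div₀ (by positivity) hnum (by positivity) hwu
    _ = 64*c/Mr^2 + 32*c/(Mr*(Mr-kr)) := by
        have h1 : Mr - kr ≠ 0 := by linarith
        field_simp
        ring

lemma Ebound2 (Mr kr u v d0 : ℝ) (hM : 8 ≤ Mr) (hk : Mr/2 ≤ kr)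
    (hu : Mr/4 ≤ u) (hw : Mr/4 ≤ kr - 1/2) (hv : |v| ≤ d0) :
    |(1/2)/(kr-1/2) - v/u| ≤ (2+4*d0)/Mr := by
  have hMpos : (0:ℝ) < Mr := by linarith
  have hwpos : (0:ℝ) < kr - 1/2 := by linarith
  have hupos : (0:ℝ) < u := by linarith
  have hd0 : (0:ℝ) ≤ d0 := le_trans (abs_nonneg _) hv
  have t1 : |(1/2)/(kr-1/2)| ≤ 2/Mr := by
    rw [abs_of_pos (by positivity)]
    rw [div_le_div_iff₀ hwpos hMpos]
    linarith
  have t2 : |v/u| ≤ 4*d0/Mr := by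
    rw [abs_div, abs_of_pos hupos]
    rw [div_le_div_iff₀ hupos hMpos]
    have h1 : |v| * Mr ≤ d0 * Mr := by
      apply mul_le_mul_of_nonneg_right hv (le_of_lt hMpos)
    nlinarith [abs_nonneg v]
  calc |(1/2)/(kr-1/2) - v/u| ≤ |(1/2)/(kr-1/2)| + |v/u| := abs_sub _ _
    _ ≤ 2/Mr + 4*d0/Mr := add_le_add t1 t2
    _ = (2+4*d0)/Mr := by ring

lemma E_bound (δ : ℕ → ℝ) (hmono : StrictMono δ) (C : ℝ)
    (hC : ∀ k : ℕ, 1 ≤ k → |δ k - ((k : ℝ) + 1/2)| ≤ C / k)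
    {M k : ℕ} (hM : 8 ≤ M) (hMr : 8*(max C 1 + |δ 0| + 1) ≤ (M:ℝ))
    (hk : (M+1)/2 ≤ k) (hk2 : k ≤ M-1) :
    |((M:ℝ)-(k:ℝ)-1/2)/((k:ℝ)-1/2) - δ (M-k-1)/δ (k-1)| ≤
      100*(max C 1 + |δ 0| + 1)/(M:ℝ)^2 +
        100*(max C 1 + |δ 0| + 1)/((M:ℝ)*((M-k:ℕ):ℝ)) := by
  obtain ⟨c1, c2, c3, c4, c5⟩ := basic_casts hM hk hk2
  obtain ⟨hu_lb, huv, ha⟩ := delta_facts δ hmono C hC hM hMr hk hk2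
  have hc1 : (1:ℝ) ≤ max C 1 := le_max_right _ _
  have hcC : C ≤ max C 1 := le_max_left _ _
  have hd0 : (0:ℝ) ≤ |δ 0| := abs_nonneg _
  have hMpos : (0:ℝ) < (M:ℝ) := by linarith
  have hM2pos : (0:ℝ) < (M:ℝ)^2 := by positivity
  rcases Nat.lt_or_ge k (M-1) with hcase | hcase
  · -- k ≤ M - 2
    have hMk1 : 1 ≤ M - k - 1 := by omega
    have hMkc : ((M-k:ℕ):ℝ) = (M:ℝ)-(k:ℝ) := by
      rw [Nat.cast_sub (by omega : k ≤ M)]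
    have hMkr : (2:ℝ) ≤ (M:ℝ)-(k:ℝ) := by
      rw [← hMkc]; exact_mod_cast (by omega : 2 ≤ M - k)
    have hb : |δ (M-k-1) - ((M:ℝ)-(k:ℝ)-1/2)| ≤ 2*(max C 1)/((M:ℝ)-(k:ℝ)) := by
      have hb0 := hC (M-k-1) hMk1
      rw [c2] at hb0
      have e : (M:ℝ)-(k:ℝ)-1+1/2 = (M:ℝ)-(k:ℝ)-1/2 := by ring
      rw [e] at hb0
      refine hb0.trans ?_
      have h1 : (0:ℝ) < ((M:ℝ)-(k:ℝ))/2 := by linarith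
      calc C/((M:ℝ)-(k:ℝ)-1) ≤ (max C 1)/(((M:ℝ)-(k:ℝ))/2) :=
            div_le_div₀ (by linarith) hcC h1 (by linarith)
        _ = 2*(max C 1)/((M:ℝ)-(k:ℝ)) := by rw [div_div_eq_mul_div]; ring
    have main := Ebound1 (M:ℝ) (k:ℝ) (δ (k-1)) (δ (M-k-1)) (max C 1) c5 c3 hMkr hu_lb ha hb hc1
    refine main.trans ?_
    rw [hMkc]
    have hdenom : (0:ℝ) < (M:ℝ)*((M:ℝ)-(k:ℝ)) := mul_pos hMpos (by linarith)
    exact add_le_add (div_le_div₀ (by linarith) (by linarith) hM2pos le_rfl)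
      (div_le_div₀ (by linarith) (by linarith) hdenom le_rfl)
  · -- k = M-1
    have hkM : k = M - 1 := by omega
    have hkr : (k:ℝ) = (M:ℝ)-1 := by rw [hkM, Nat.cast_sub (by omega : 1 ≤ M)]; norm_num
    have e0 : M - k - 1 = 0 := by omega
    have e1 : ((M-k:ℕ):ℝ) = 1 := by rw [show M - k = 1 from by omega]; norm_num
    have ez : (M:ℝ)-(k:ℝ)-1/2 = 1/2 := by rw [hkr]; ring
    have hw : (M:ℝ)/4 ≤ (k:ℝ)-1/2 := by linarith
    have main := Ebound2 (M:ℝ) (k:ℝ) (δ (k-1)) (δ (M-k-1)) (|δ 0|) c5 c3 hu_lb hw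
      (by rw [e0])
    rw [ez]
    refine main.trans ?_
    rw [e1, mul_one]
    have h1 : (0:ℝ) ≤ 100*(max C 1 + |δ 0| + 1)/(M:ℝ)^2 := by positivity
    have h2 : (2+4*|δ 0|)/(M:ℝ) ≤ 100*(max C 1 + |δ 0| + 1)/(M:ℝ) :=
      div_le_div₀ (by linarith) (by linarith) hMpos le_rfl
    linarith

lemma sum_inv_rev (m M : ℕ) (hm : 1 ≤ m) (hmM : m ≤ M) :
    ∑ k ∈ Finset.Icc m (M-1), (1:ℝ)/((M-k:ℕ):ℝ) = Hh (M-m) := by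
  rw [Hh_eq]
  apply Finset.sum_nbij' (fun k => M - k) (fun j => M - j)
  · intro a ha; simp only [Finset.mem_Icc] at ha; simp only [Finset.mem_Ioc]; omega
  · intro a ha; simp only [Finset.mem_Ioc] at ha; simp only [Finset.mem_Icc]; omega
  · intro a ha; simp only [Finset.mem_Icc] at ha; omega
  · intro a ha; simp only [Finset.mem_Ioc] at ha; omega
  · intro a ha; rfl

noncomputable def Eterm (δ : ℕ → ℝ) (M k : ℕ) : ℝ :=
  ((M:ℝ)-(k:ℝ)-1/2)/((k:ℝ)-1/2) - δ (M-k-1)/δ (k-1)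

lemma tendsto_R (δ : ℕ → ℝ) (hmono : StrictMono δ) (C : ℝ)
    (hC : ∀ k : ℕ, 1 ≤ k → |δ k - ((k : ℝ) + 1/2)| ≤ C / k) :
    Filter.Tendsto (fun M : ℕ => ∑ k ∈ Finset.Icc ((M+1)/2) (M-1), Eterm δ M k)
      atTop (nhds 0) := by
  set K := 100*(max C 1 + |δ 0| + 1) with hK
  have hKpos : (0:ℝ) < K := by
    have : (1:ℝ) ≤ max C 1 := le_max_right _ _
    have := abs_nonneg (δ 0)
    positivity
  apply squeeze_zero_norm' (a := fun M : ℕ => K*(1/M) + (K*(1/M) + K*(Real.log M/M)))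
  · have hev := tendsto_natCast_atTop_atTop (R := ℝ) |>.eventually_ge_atTop
      (8*(max C 1 + |δ 0| + 1))
    filter_upwards [eventually_ge_atTop 8, hev] with M hM hMr
    have hMpos : (0:ℝ) < M := by
      have : (8:ℝ) ≤ (M:ℝ) := by exact_mod_cast hM
      linarith
    set m := (M+1)/2 with hm
    have hm1 : 1 ≤ m := by omega
    have hmM : m ≤ M - 1 := by omega
    rw [Real.norm_eq_abs]
    calc |∑ k ∈ Finset.Icc m (M-1), Eterm δ M k|
        ≤ ∑ k ∈ Finset.Icc m (M-1), |Eterm δ M k| := Finset.abs_sum_le_sum_abs _ _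
      _ ≤ ∑ k ∈ Finset.Icc m (M-1), (K/(M:ℝ)^2 + K/((M:ℝ)*((M-k:ℕ):ℝ))) := by
          apply Finset.sum_le_sum
          intro k hk
          simp only [Finset.mem_Icc] at hk
          exact E_bound δ hmono C hC hM hMr hk.1 hk.2
      _ = (((Finset.Icc m (M-1)).card : ℝ))*(K/(M:ℝ)^2) +
            (K/(M:ℝ))*∑ k ∈ Finset.Icc m (M-1), (1:ℝ)/((M-k:ℕ):ℝ) := by
          rw [Finset.sum_add_distrib, Finset.sum_const, nsmul_eq_mul, Finset.mul_sum]
          congr 1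
          apply Finset.sum_congr rfl
          intro k _
          rw [mul_one_div, div_div]
      _ ≤ (M:ℝ)*(K/(M:ℝ)^2) + (K/(M:ℝ))*(1 + Real.log M) := by
          apply add_le_add
          · apply mul_le_mul_of_nonneg_right ?_ (by positivity)
            rw [Nat.card_Icc]
            exact_mod_cast (by omega : M - 1 + 1 - m ≤ M)
          · apply mul_le_mul_of_nonneg_left ?_ (by positivity)
            rw [sum_inv_rev m M hm1 (by omega)]
            refine (harmonic_le_one_add_log (M-m)).trans ?_
            have h1 : (1:ℝ) ≤ ((M-m:ℕ):ℝ) := by exact_mod_cast (by omega : 1 ≤ M - m)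
            have h2 : ((M-m:ℕ):ℝ) ≤ (M:ℝ) := by exact_mod_cast (by omega : M - m ≤ M)
            have := Real.log_le_log (by linarith) h2
            linarith
      _ = K*(1/M) + (K*(1/M) + K*(Real.log M/M)) := by
          field_simp
  · have h1 : Filter.Tendsto (fun M : ℕ => K*(1/(M:ℝ))) atTop (nhds 0) := by
      exact (tendsto_const_div_atTop_nhds_zero_nat K).congr
        (fun n => (mul_one_div K _).symm)
    have h2 : Filter.Tendsto (fun M : ℕ => K*(Real.log M/(M:ℝ))) atTop (nhds 0) := by
      have hbase := (Real.isLittleO_log_id_atTop.tendsto_div_nhds_zero).comp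
        (tendsto_natCast_atTop_atTop (R := ℝ))
      have := hbase.const_mul K
      simpa using this
    have := h1.add (h1.add h2)
    simpa using this

/-- If δ is a strictly increasing divisor function with δ(k) = k + 1/2 + O(1/k), then
P_M = Σ_{k=⌈M/2⌉}^{M-1} M(1/k - 1/(k + D(k))) converges to ln 2 - 1/2 as M → ∞. -/
theorem asymptotically_linear_prob_limit (δ : ℕ → ℝ) (hmono : StrictMono δ)
    (C : ℝ) (hC : ∀ k : ℕ, 1 ≤ k → |δ k - ((k : ℝ) + 1/2)| ≤ C / k) :
    Tendsto (fun M : ℕ =>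
      ∑ k ∈ Finset.Icc ((M + 1) / 2) (M - 1),
        (M : ℝ) * (1 / k - 1 / ((k : ℝ) +
          (((M : ℝ) - k) * δ (k - 1) - (k : ℝ) * δ (M - k - 1)) /
            (δ (k - 1) + δ (M - k - 1)))))
      atTop (nhds (Real.log 2 - 1/2)) := by
  have hev := tendsto_natCast_atTop_atTop (R := ℝ) |>.eventually_ge_atTop
    (8*(max C 1 + |δ 0| + 1))
  have hmain := (tendsto_G.sub tendsto_T).add (tendsto_R δ hmono C hC)
  rw [add_zero] at hmain
  apply hmain.congr'
  filter_upwards [eventually_ge_atTop 8, hev] with M hM hMr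
  rw [← Finset.sum_sub_distrib, ← Finset.sum_add_distrib]
  apply Finset.sum_congr rfl
  intro k hk
  simp only [Finset.mem_Icc] at hk
  obtain ⟨c1, c2, c3, c4, c5⟩ := basic_casts hM hk.1 hk.2
  obtain ⟨hu_lb, huv, _⟩ := delta_facts δ hmono C hC hM hMr hk.1 hk.2
  have hu : 0 < δ (k-1) := lt_of_lt_of_le (by linarith) hu_lb
  have hte := term_eq δ M k (by omega) (by omega) hu huv
  rw [hte, Eterm]
  have hk0 : ((k:ℝ)) ≠ 0 := by
    have : (0:ℝ) < (k:ℝ) := by linarith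
    exact this.ne'
  have hw0 : ((k:ℝ)-1/2) ≠ 0 := by
    have : (0:ℝ) < (k:ℝ)-1/2 := by linarith
    exact this.ne'
  have hw1 : (-1:ℝ) + (k:ℝ)*2 ≠ 0 := by
    have h2 : (2:ℝ) ≤ (k:ℝ) := by linarith
    intro h; linarith
  field_simp
  linear_combination (-((k:ℝ) * δ (k-1))) * (mul_inv_cancel₀ hw1)
end

section
/- Fix k ∈ (-1/3, 1/3). Under the uniform distribution on the triangle {(x,y) : 1 < x < y < h}, the probability that (1 - 2x + y)/(3y) > k converges to 1/2 - (3/2)k as h → ∞. Consequently, τ = (1 - 2x + y)/(3y) is asymptotically uniformly distributed on (-1/3, 1/3). -/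
open Filter MeasureTheory
open Set


lemma vol_swap_region (g : ℝ → ℝ) (hg : Continuous g) (hg1 : ∀ y, 1 ≤ g y) (h : ℝ) :
    volume {p : ℝ × ℝ | p.2 ∈ Set.Ioo 1 h ∧ p.1 ∈ Set.Ioo 1 (g p.2)} =
      ENNReal.ofReal (∫ y in Set.Ioo 1 h, (g y - 1)) := by
  have hseq : {p : ℝ × ℝ | p.2 ∈ Set.Ioo 1 h ∧ p.1 ∈ Set.Ioo 1 (g p.2)} =
      Prod.swap ⁻¹' (regionBetween (fun _ => (1:ℝ)) g (Set.Ioo 1 h)) := by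
    ext ⟨x, y⟩; rfl
  have hR : MeasurableSet (regionBetween (fun _ => (1:ℝ)) g (Set.Ioo 1 h)) :=
    measurableSet_regionBetween measurable_const hg.measurable measurableSet_Ioo
  rw [hseq, Measure.volume_eq_prod,
    (Measure.measurePreserving_swap (μ := volume) (ν := volume)).measure_preimage hR.nullMeasurableSet]
  have hint : IntegrableOn g (Set.Ioo 1 h) volume :=
    (hg.integrableOn_Icc).mono_set Set.Ioo_subset_Icc_self
  rw [volume_regionBetween_eq_integral (integrableOn_const measure_Ioo_lt_top.ne)
      hint measurableSet_Ioo (fun y _ => hg1 y)]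
  rfl

lemma integral_Ioo_lin (a b u v : ℝ) (hab : a ≤ b) :
    ∫ y in Set.Ioo a b, (u * y + v) = u * (b^2 - a^2)/2 + v * (b - a) := by
  rw [← integral_Ioc_eq_integral_Ioo, ← intervalIntegral.integral_of_le hab]
  have h1 : IntervalIntegrable (fun y : ℝ => u * y) volume a b :=
    (continuous_const.mul continuous_id).intervalIntegrable a b
  have h2 : IntervalIntegrable (fun _ : ℝ => v) volume a b :=
    intervalIntegrable_const
  rw [intervalIntegral.integral_add h1 h2, intervalIntegral.integral_const,
    intervalIntegral.integral_const_mul, integral_id, smul_eq_mul]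
  ring

lemma vol_tri (h : ℝ) (hh : 1 ≤ h) :
    volume {p : ℝ × ℝ | 1 < p.1 ∧ p.1 < p.2 ∧ p.2 < h} = ENNReal.ofReal ((h-1)^2/2) := by
  have hset : {p : ℝ × ℝ | 1 < p.1 ∧ p.1 < p.2 ∧ p.2 < h} =
      {p : ℝ × ℝ | p.2 ∈ Set.Ioo 1 h ∧ p.1 ∈ Set.Ioo 1 (max 1 p.2)} := by
    ext ⟨x, y⟩
    simp only [Set.mem_setOf_eq, Set.mem_Ioo, lt_max_iff]
    constructor
    · rintro ⟨h1, h2, h3⟩; exact ⟨⟨h1.trans h2, h3⟩, h1, Or.inr h2⟩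
    · rintro ⟨⟨h1, h2⟩, h3, h4 | h4⟩
      · linarith
      · exact ⟨h3, h4, h2⟩
  rw [hset, vol_swap_region _ (by fun_prop : Continuous fun y : ℝ => max 1 y) (fun y => le_max_left _ _)]
  congr 1
  rw [setIntegral_congr_fun measurableSet_Ioo
    (g := fun y => 1 * y + (-1)) (fun y hy => by simp [max_eq_right hy.1.le]; ring),
    integral_Ioo_lin _ _ _ _ hh]
  ring

/-- Under the uniform distribution on the triangle {(x,y) : 1 < x < y < h}, the
probability that τ = (1 - 2x + y)/(3y) > k converges to 1/2 - (3/2)k as h → ∞,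
for each fixed k ∈ (-1/3, 1/3); hence τ is asymptotically uniform on (-1/3, 1/3). -/
theorem tau_asymptotically_uniform (k : ℝ) (h1 : -(1/3) < k) (h2 : k < 1/3) :
    Tendsto (fun h : ℝ =>
      (volume {p : ℝ × ℝ | 1 < p.1 ∧ p.1 < p.2 ∧ p.2 < h ∧
        k < (1 - 2*p.1 + p.2) / (3*p.2)}).toReal /
      (volume {p : ℝ × ℝ | 1 < p.1 ∧ p.1 < p.2 ∧ p.2 < h}).toReal)
      atTop (nhds (1/2 - 3/2 * k)) := by
  set c : ℝ := (1 - 3*k)/2 with hcdef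
  have hc0 : 0 < c := by rw [hcdef]; linarith
  have hc1 : c < 1 := by rw [hcdef]; linarith
  set g : ℝ → ℝ := fun y => max 1 (min y (c*y + 1/2)) with hgdef
  have hgc : Continuous g := by rw [hgdef]; fun_prop
  have hg1 : ∀ y, 1 ≤ g y := fun y => le_max_left _ _
  set H : ℝ := max (max (1/(2*(1-c))) (1/(2*c))) 2 with hHdef
  have hH2 : (2:ℝ) ≤ H := le_max_right _ _
  have hHa : 1/(2*(1-c)) ≤ H := le_trans (le_max_left _ _) (le_max_left _ _)
  have hHb : 1/(2*c) ≤ H := le_trans (le_max_right _ _) (le_max_left _ _)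
  have hnum : ∀ h : ℝ, {p : ℝ × ℝ | 1 < p.1 ∧ p.1 < p.2 ∧ p.2 < h ∧
        k < (1 - 2*p.1 + p.2) / (3*p.2)} =
      {p : ℝ × ℝ | p.2 ∈ Set.Ioo 1 h ∧ p.1 ∈ Set.Ioo 1 (g p.2)} := by
    intro h
    ext ⟨x, y⟩
    simp only [Set.mem_setOf_eq, Set.mem_Ioo, hgdef, lt_max_iff, lt_min_iff]
    constructor
    · rintro ⟨hx, hxy, hy, hk⟩
      have hy0 : 0 < 3*y := by linarith
      rw [lt_div_iff₀ hy0] at hk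
      refine ⟨⟨hx.trans hxy, hy⟩, hx, Or.inr ⟨hxy, ?_⟩⟩
      rw [hcdef]; nlinarith
    · rintro ⟨⟨hy1, hy⟩, hx, hm⟩
      rcases hm with hm | ⟨hxy, hxc⟩
      · linarith
      · have hy0 : 0 < 3*y := by linarith
        refine ⟨hx, hxy, hy, ?_⟩
        rw [lt_div_iff₀ hy0]
        rw [hcdef] at hxc; nlinarith
  set N : ℝ → ℝ := fun h => ∫ y in Set.Ioo 1 h, (g y - 1) with hNdef
  have hNnn : ∀ h, 0 ≤ N h := fun h =>
    setIntegral_nonneg measurableSet_Ioo (fun y _ => by linarith [hg1 y])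
  have hvolnum : ∀ h : ℝ, volume {p : ℝ × ℝ | 1 < p.1 ∧ p.1 < p.2 ∧ p.2 < h ∧
        k < (1 - 2*p.1 + p.2) / (3*p.2)} = ENNReal.ofReal (N h) := by
    intro h; rw [hnum h, vol_swap_region g hgc hg1 h]
  have hgint : ∀ a b : ℝ, IntervalIntegrable (fun y => g y - 1) volume a b :=
    fun a b => ((hgc.sub continuous_const)).intervalIntegrable a b
  set A : ℝ := N H - c/2*H^2 + H/2 with hAdef
  have hNsplit : ∀ h : ℝ, H ≤ h → N h = c/2 * h^2 - h/2 + A := by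
    intro h hh
    have h1H : (1:ℝ) ≤ H := by linarith
    have h1h : (1:ℝ) ≤ h := by linarith
    have e1 : ∀ b : ℝ, 1 ≤ b → N b = ∫ y in (1:ℝ)..b, (g y - 1) := by
      intro b hb
      rw [hNdef]
      rw [intervalIntegral.integral_of_le hb, integral_Ioc_eq_integral_Ioo]
    have heq : ∀ y ∈ Set.uIcc H h, g y - 1 = c * y + (-(1:ℝ)/2) := by
      intro y hy
      rw [Set.uIcc_of_le hh] at hy
      have hyH : H ≤ y := hy.1
      have hmin : min y (c*y + 1/2) = c*y + 1/2 := by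
        apply min_eq_right
        have hle : 1/(2*(1-c)) ≤ y := le_trans hHa hyH
        rw [div_le_iff₀ (by linarith)] at hle
        nlinarith
      have hmax : max 1 (c*y + 1/2) = c*y + 1/2 := by
        apply max_eq_right
        have hle : 1/(2*c) ≤ y := le_trans hHb hyH
        rw [div_le_iff₀ (by linarith)] at hle
        nlinarith
      rw [hgdef]
      simp only [hmin, hmax]; ring
    have htail : (∫ y in H..h, (g y - 1)) = c * (h^2 - H^2)/2 - (h - H)/2 := by
      rw [intervalIntegral.integral_congr heq,
        intervalIntegral.integral_add ((by fun_prop : Continuous fun y : ℝ => c * y).intervalIntegrable _ _)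
          intervalIntegrable_const,
        intervalIntegral.integral_const, intervalIntegral.integral_const_mul, integral_id,
        smul_eq_mul]
      ring
    rw [e1 h h1h,
      ← intervalIntegral.integral_add_adjacent_intervals (hgint 1 H) (hgint H h),
      htail, ← e1 H h1H, hAdef]
    ring
  have hfinal : Tendsto (fun h : ℝ => (c/2*h^2 - h/2 + A) / ((h-1)^2/2)) atTop (nhds c) := by
    have t1 : Tendsto (fun h : ℝ => 1/h) atTop (nhds 0) := by
      simpa using tendsto_inv_atTop_zero
    have t2 : Tendsto (fun h : ℝ => 2*A/h^2) atTop (nhds 0) :=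
      Tendsto.div_atTop tendsto_const_nhds (tendsto_pow_atTop two_ne_zero)
    have tnum : Tendsto (fun h : ℝ => c - 1/h + 2*A/h^2) atTop (nhds c) := by
      have := (tendsto_const_nhds (x := c) (f := atTop (α := ℝ))).sub t1 |>.add t2
      simpa using this
    have tden : Tendsto (fun h : ℝ => (1 - 1/h)^2) atTop (nhds 1) := by
      have := ((tendsto_const_nhds (x := (1:ℝ)) (f := atTop (α := ℝ))).sub t1).pow 2
      simpa using this
    have tdiv := tnum.div tden one_ne_zero
    rw [div_one] at tdiv
    apply Tendsto.congr' _ tdiv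
    filter_upwards [eventually_gt_atTop (1:ℝ)] with h hh
    have h0 : h ≠ 0 := ne_of_gt (lt_trans zero_lt_one hh)
    have hm1 : h - 1 ≠ 0 := sub_ne_zero.mpr (ne_of_gt hh)
    rw [Pi.div_apply]
    field_simp
  have hc' : (1/2 - 3/2 * k : ℝ) = c := by rw [hcdef]; ring
  rw [hc']
  apply Tendsto.congr' _ hfinal
  filter_upwards [eventually_ge_atTop H] with h hh
  have h1h : (1:ℝ) ≤ h := by linarith
  rw [hvolnum h, ENNReal.toReal_ofReal (hNnn h), vol_tri h h1h,
    ENNReal.toReal_ofReal (by positivity), hNsplit h hh]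
end
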